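/- arXiv:1007.5455 — 2 statements merged into one kernel-verified Lean document; each statement's English description precedes it below -/
import Mathlib

section
/- Let m be a (nonnegative Borel) measure on [0,∞) such that μ(t) := ∫_{[0,∞)} e^{-tx} m(dx) is finite for all t > 0. Then there exists a constant C > 1 such that μ(t) ≤ C · μ(t+1) for every t > 1. -/
open MeasureTheory Set Real

theorem stmt_0 (m : Measure ℝ)
    (hfin : ∀ t : ℝ, 0 < t →
      MeasureTheory.IntegrableOn (fun x => Real.exp (-t * x)) (Set.Ici 0) m)
    (μ : ℝ → ℝ)
    (hμ : ∀ t : ℝ, μ t = ∫ x in Set.Ici (0:ℝ), Real.exp (-t * x) ∂m) :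
    ∃ C : ℝ, 1 < C ∧ ∀ t : ℝ, 1 < t → μ t ≤ C * μ (t + 1) := by
  by_cases hdeg : ∀ n : ℕ, m (Icc (0:ℝ) n) = 0
  · -- degenerate case: m vanishes on [0,∞), so μ ≡ 0
    have h0 : m (Ici (0:ℝ)) = 0 := by
      have hsub : Ici (0:ℝ) ⊆ ⋃ n : ℕ, Icc (0:ℝ) n := by
        intro x hx
        exact mem_iUnion.2 ⟨⌈x⌉₊, hx, Nat.le_ceil x⟩
      exact measure_mono_null hsub (measure_iUnion_null hdeg)
    have hz : ∀ t : ℝ, μ t = 0 := by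
      intro t
      rw [hμ t, Measure.restrict_eq_zero.mpr h0, integral_zero_measure]
    exact ⟨2, one_lt_two, fun t ht => by rw [hz t, hz (t + 1)]; norm_num⟩
  · push_neg at hdeg
    obtain ⟨n, hn⟩ := hdeg
    set A : ℝ := (n : ℝ) with hA
    have hA0 : 0 ≤ A := Nat.cast_nonneg n
    set B : ℝ := 2 * A + 2 with hB
    have hAB : A ≤ B := by linarith
    have hB0 : 0 < B := by linarith
    -- integrability of x ↦ exp (-x) on [0,∞)
    have hint1 : IntegrableOn (fun x => Real.exp (-1 * x)) (Ici 0) m := hfin 1 one_pos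
    -- m (Icc 0 A) is finite
    have hfinA : m (Icc 0 A) < ⊤ := by
      have hintA : IntegrableOn (fun x => Real.exp (-1 * x)) (Icc 0 A) m :=
        hint1.mono_set (Icc_subset_Ici_self)
      have hlb : ENNReal.ofReal (Real.exp (-A)) * m (Icc 0 A)
          ≤ ∫⁻ x in Icc 0 A, ‖Real.exp (-1 * x)‖₊ ∂m := by
        rw [← setLIntegral_const]
        refine setLIntegral_mono (by fun_prop) ?_
        intro x hx
        rw [← Real.enorm_eq_ofReal (Real.exp_pos _).le, enorm_eq_nnnorm]
        have : Real.exp (-A) ≤ Real.exp (-1 * x) := by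
          rw [Real.exp_le_exp]; simp only [mem_Icc] at hx; linarith [hx.2]
        simp only [Real.nnnorm_of_nonneg (Real.exp_pos _).le] at *
        exact_mod_cast ENNReal.coe_le_coe.2 (by exact_mod_cast this)
      have hfi : (∫⁻ x in Icc 0 A, ‖Real.exp (-1 * x)‖₊ ∂m) < ⊤ := hintA.2
      have := lt_of_le_of_lt hlb hfi
      rcases eq_top_or_lt_top (m (Icc 0 A)) with h | h
      · rw [h, ENNReal.mul_top (by positivity)] at this
        exact absurd this (lt_irrefl _)
      · exact h
    set M : ℝ := (m (Icc 0 A)).toReal with hM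
    have hM0 : 0 < M := ENNReal.toReal_pos hn hfinA.ne
    set K : ℝ := ∫ x in Ici (0:ℝ), Real.exp (-1 * x) ∂m with hK
    have hK0 : 0 ≤ K :=
      setIntegral_nonneg measurableSet_Ici (fun x _ => (Real.exp_pos _).le)
    refine ⟨Real.exp B + K / M * Real.exp (2 * A), ?_, ?_⟩
    · have h1 : (1:ℝ) < Real.exp B := by rw [← Real.exp_zero]; exact Real.exp_lt_exp.2 hB0
      have h2 : 0 ≤ K / M * Real.exp (2 * A) := by positivity
      linarith
    · intro t ht
      have ht1 : 0 < t := by linarith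
      have ht2 : 0 < t + 1 := by linarith
      have hft : IntegrableOn (fun x => Real.exp (-t * x)) (Ici 0) m := hfin t ht1
      have hft1 : IntegrableOn (fun x => Real.exp (-(t + 1) * x)) (Ici 0) m :=
        hfin (t + 1) ht2
      have hμ1nonneg : 0 ≤ μ (t + 1) := by
        rw [hμ]
        exact setIntegral_nonneg measurableSet_Ici (fun x _ => (Real.exp_pos _).le)
      -- split the integral
      have hsplit : μ t = (∫ x in Icc (0:ℝ) B, Real.exp (-t * x) ∂m)
          + ∫ x in Ioi B, Real.exp (-t * x) ∂m := by
        rw [hμ t, ← Icc_union_Ioi_eq_Ici (le_of_lt hB0)]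
        exact setIntegral_union ((Iic_disjoint_Ioi le_rfl).mono Icc_subset_Iic_self le_rfl) measurableSet_Ioi
          (hft.mono_set (Icc_union_Ioi_eq_Ici (le_of_lt hB0) ▸ subset_union_left))
          (hft.mono_set (Icc_union_Ioi_eq_Ici (le_of_lt hB0) ▸ subset_union_right))
      -- head estimate
      have hhead : (∫ x in Icc (0:ℝ) B, Real.exp (-t * x) ∂m)
          ≤ Real.exp B * μ (t + 1) := by
        have step1 : (∫ x in Icc (0:ℝ) B, Real.exp (-t * x) ∂m)
            ≤ ∫ x in Icc (0:ℝ) B, Real.exp B * Real.exp (-(t + 1) * x) ∂m := by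
          refine setIntegral_mono_on (hft.mono_set Icc_subset_Ici_self)
            ((hft1.mono_set Icc_subset_Ici_self).const_mul _) measurableSet_Icc ?_
          intro x hx
          rw [← Real.exp_add, Real.exp_le_exp]
          simp only [mem_Icc] at hx
          nlinarith [hx.1, hx.2]
        have step2 : (∫ x in Icc (0:ℝ) B, Real.exp B * Real.exp (-(t + 1) * x) ∂m)
            = Real.exp B * ∫ x in Icc (0:ℝ) B, Real.exp (-(t + 1) * x) ∂m :=
          integral_const_mul _ _
        have step3 : (∫ x in Icc (0:ℝ) B, Real.exp (-(t + 1) * x) ∂m) ≤ μ (t + 1) := by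
          rw [hμ (t + 1)]
          refine setIntegral_mono_set hft1 ?_ (HasSubset.Subset.eventuallyLE Icc_subset_Ici_self)
          exact Filter.Eventually.of_forall fun x => (Real.exp_pos _).le
        calc (∫ x in Icc (0:ℝ) B, Real.exp (-t * x) ∂m)
            ≤ Real.exp B * ∫ x in Icc (0:ℝ) B, Real.exp (-(t + 1) * x) ∂m := by
              rw [← step2]; exact step1
          _ ≤ Real.exp B * μ (t + 1) :=
              mul_le_mul_of_nonneg_left step3 (Real.exp_pos _).le
      -- tail estimate
      have htail : (∫ x in Ioi B, Real.exp (-t * x) ∂m)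
          ≤ Real.exp (-(t - 1) * B) * K := by
        have step1 : (∫ x in Ioi B, Real.exp (-t * x) ∂m)
            ≤ ∫ x in Ioi B, Real.exp (-(t - 1) * B) * Real.exp (-1 * x) ∂m := by
          refine setIntegral_mono_on
            (hft.mono_set (Ioi_subset_Ici (le_of_lt hB0)))
            ((hint1.mono_set (Ioi_subset_Ici (le_of_lt hB0))).const_mul _)
            measurableSet_Ioi ?_
          intro x hx
          rw [← Real.exp_add, Real.exp_le_exp]
          simp only [mem_Ioi] at hx
          nlinarith
        have step2 : (∫ x in Ioi B, Real.exp (-(t - 1) * B) * Real.exp (-1 * x) ∂m)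
            = Real.exp (-(t - 1) * B) * ∫ x in Ioi B, Real.exp (-1 * x) ∂m :=
          integral_const_mul _ _
        have step3 : (∫ x in Ioi B, Real.exp (-1 * x) ∂m) ≤ K := by
          refine setIntegral_mono_set hint1 ?_
            (HasSubset.Subset.eventuallyLE (Ioi_subset_Ici (le_of_lt hB0)))
          exact Filter.Eventually.of_forall fun x => (Real.exp_pos _).le
        calc (∫ x in Ioi B, Real.exp (-t * x) ∂m)
            ≤ Real.exp (-(t - 1) * B) * ∫ x in Ioi B, Real.exp (-1 * x) ∂m := by
              rw [← step2]; exact step1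
          _ ≤ Real.exp (-(t - 1) * B) * K :=
              mul_le_mul_of_nonneg_left step3 (Real.exp_pos _).le
      -- lower bound for μ (t+1)
      have hlow : Real.exp (-(t + 1) * A) * M ≤ μ (t + 1) := by
        have step1 : Real.exp (-(t + 1) * A) * M
            ≤ ∫ x in Icc (0:ℝ) A, Real.exp (-(t + 1) * x) ∂m := by
          have : (∫ _ in Icc (0:ℝ) A, Real.exp (-(t + 1) * A) ∂m)
              = M * Real.exp (-(t + 1) * A) := by
            rw [setIntegral_const, smul_eq_mul]; rfl
          rw [mul_comm, ← this]
          refine setIntegral_mono_on (integrableOn_const hfinA.ne)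
            (hft1.mono_set Icc_subset_Ici_self) measurableSet_Icc ?_
          intro x hx
          rw [Real.exp_le_exp]
          simp only [mem_Icc] at hx
          nlinarith [hx.1, hx.2]
        have step2 : (∫ x in Icc (0:ℝ) A, Real.exp (-(t + 1) * x) ∂m) ≤ μ (t + 1) := by
          rw [hμ (t + 1)]
          refine setIntegral_mono_set hft1 ?_ (HasSubset.Subset.eventuallyLE Icc_subset_Ici_self)
          exact Filter.Eventually.of_forall fun x => (Real.exp_pos _).le
        linarith
      -- combine: tail coefficient comparison
      have hcoef : Real.exp (-(t - 1) * B) * K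
          ≤ K / M * Real.exp (2 * A) * (Real.exp (-(t + 1) * A) * M) := by
        have hMne : M ≠ 0 := ne_of_gt hM0
        have hrw : K / M * Real.exp (2 * A) * (Real.exp (-(t + 1) * A) * M)
            = K * (Real.exp (2 * A) * Real.exp (-(t + 1) * A)) := by
          field_simp
        rw [hrw, ← Real.exp_add]
        have hexp : Real.exp (-(t - 1) * B) ≤ Real.exp (2 * A + -(t + 1) * A) := by
          rw [Real.exp_le_exp]
          nlinarith [ht, hAB, hA0]
        calc Real.exp (-(t - 1) * B) * K ≤ Real.exp (2 * A + -(t + 1) * A) * K :=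
              mul_le_mul_of_nonneg_right hexp hK0
          _ = K * Real.exp (2 * A + -(t + 1) * A) := mul_comm _ _
      have htail2 : (∫ x in Ioi B, Real.exp (-t * x) ∂m)
          ≤ K / M * Real.exp (2 * A) * μ (t + 1) := by
        have hc : 0 ≤ K / M * Real.exp (2 * A) := by positivity
        calc (∫ x in Ioi B, Real.exp (-t * x) ∂m)
            ≤ Real.exp (-(t - 1) * B) * K := htail
          _ ≤ K / M * Real.exp (2 * A) * (Real.exp (-(t + 1) * A) * M) := hcoef
          _ ≤ K / M * Real.exp (2 * A) * μ (t + 1) :=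
              mul_le_mul_of_nonneg_left hlow hc
      rw [hsplit, add_mul]
      exact add_le_add hhead htail2
end

section
/- Let η : (0,∞) → [0,1] be measurable and γ ∈ ℝ, and define log φ(λ) = γ + ∫₀^∞ (t/(1+t²) − 1/(λ+t)) η(t) dt and log χ(λ) = γ/2 + ∫₀^∞ (t/(2(1+t²)) − 1/(2√t(λ+√t))) η(t) dt, assuming both integrals converge absolutely for all λ > 0. Then for every λ > 0, |log χ(λ) − (1/2) log φ(λ²)| ≤ π/2; equivalently e^{−π/2} √(φ(λ²)) ≤ χ(λ) ≤ e^{π/2} √(φ(λ²)). -/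
open MeasureTheory Set Real Filter Topology

lemma stmt5_aux_integral (lam : ℝ) (hlam : 0 < lam) :
    IntegrableOn (fun t => lam / (Real.sqrt t * (lam^2 + t))) (Ioi 0) ∧
    ∫ t in Ioi (0:ℝ), lam / (Real.sqrt t * (lam^2 + t)) = π := by
  have hlam0 : lam ≠ 0 := hlam.ne'
  set F : ℝ → ℝ := fun t => 2 * Real.arctan (Real.sqrt t / lam) with hF
  have hcont : ContinuousWithinAt F (Ici 0) 0 := by
    have : Continuous F :=
      continuous_const.mul (Real.continuous_arctan.comp (Real.continuous_sqrt.div_const lam))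
    exact this.continuousWithinAt
  have hderiv : ∀ t ∈ Ioi (0:ℝ), HasDerivAt F (lam / (Real.sqrt t * (lam^2 + t))) t := by
    intro t ht
    have ht0 : (0:ℝ) < t := ht
    have hs : Real.sqrt t ≠ 0 := (Real.sqrt_pos.2 ht0).ne'
    have h1 : HasDerivAt (fun u => Real.sqrt u / lam) (1/(2*Real.sqrt t)/lam) t :=
      (Real.hasDerivAt_sqrt ht0.ne').div_const lam
    have h2 := (Real.hasDerivAt_arctan (Real.sqrt t / lam)).comp t h1
    have h3 := h2.const_mul 2
    refine h3.congr_deriv ?_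
    have hsq : Real.sqrt t ^ 2 = t := Real.sq_sqrt ht0.le
    have hpos : lam^2 + t ≠ 0 := by positivity
    field_simp
    nlinarith [hsq]
  have hnonneg : ∀ t ∈ Ioi (0:ℝ), 0 ≤ lam / (Real.sqrt t * (lam^2 + t)) := by
    intro t ht
    have ht0 : (0:ℝ) < t := ht
    positivity
  have htend : Tendsto F atTop (𝓝 π) := by
    have hsq : Tendsto Real.sqrt atTop atTop := by
      refine Tendsto.congr' ?_ (tendsto_rpow_atTop (by norm_num : (0:ℝ) < 1/2))
      filter_upwards [eventually_ge_atTop (0:ℝ)] with x hx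
      rw [← Real.sqrt_eq_rpow]
    have h1 : Tendsto (fun t => Real.sqrt t / lam) atTop atTop :=
      hsq.atTop_div_const hlam
    have h2 : Tendsto (fun t => Real.arctan (Real.sqrt t / lam)) atTop (𝓝 (π/2)) :=
      (Real.tendsto_arctan_atTop.mono_right nhdsWithin_le_nhds).comp h1
    have h3 := h2.const_mul 2
    convert h3 using 2
    ring
  have hint := integrableOn_Ioi_deriv_of_nonneg hcont hderiv hnonneg htend
  have heq := integral_Ioi_of_hasDerivAt_of_nonneg hcont hderiv hnonneg htend
  refine ⟨hint, ?_⟩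
  rw [heq]
  simp [hF, Real.sqrt_zero]

-- pointwise bound
lemma stmt5_aux_ptwise (lam t : ℝ) (hlam : 0 < lam) (ht : 0 < t) :
    |1/(lam^2+t) - 1/(Real.sqrt t * (lam + Real.sqrt t))|
      ≤ lam / (Real.sqrt t * (lam^2 + t)) := by
  set s := Real.sqrt t with hs
  have hs0 : 0 < s := Real.sqrt_pos.2 ht
  have hsq : s ^ 2 = t := Real.sq_sqrt ht.le
  rw [← hsq]
  have hd1 : (0:ℝ) < lam^2 + s^2 := by positivity
  have hd2 : (0:ℝ) < s * (lam + s) := by positivity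
  have key : 1/(lam^2+s^2) - 1/(s*(lam+s)) = lam*(s-lam)/((lam^2+s^2)*(s*(lam+s))) := by
    field_simp
    ring
  rw [key, abs_div, abs_mul, abs_of_pos hlam, abs_of_pos (by positivity : (0:ℝ) < (lam^2+s^2)*(s*(lam+s)))]
  rw [div_le_div_iff₀ (by positivity) (by positivity)]
  have habs : |s - lam| ≤ s + lam := by
    have := abs_sub_abs_le_abs_sub s lam
    have h2 := abs_sub s lam
    calc |s - lam| ≤ |s| + |lam| := abs_sub _ _
      _ = s + lam := by rw [abs_of_pos hs0, abs_of_pos hlam]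
  nlinarith [mul_pos hd1 hd2, mul_pos hs0 hd1, hlam.le, hs0.le, habs,
    mul_le_mul_of_nonneg_left habs hlam.le]


theorem stmt_5 (η : ℝ → ℝ) (hη : ∀ t > 0, η t ∈ Set.Icc (0:ℝ) 1)
    (hηm : Measurable η) (γ : ℝ) (φ χ : ℝ → ℝ)
    (hφpos : ∀ lam > 0, 0 < φ lam) (hχpos : ∀ lam > 0, 0 < χ lam)
    (hφint : ∀ lam > 0, MeasureTheory.IntegrableOn
      (fun t => (t / (1 + t ^ 2) - 1 / (lam + t)) * η t) (Set.Ioi 0))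
    (hχint : ∀ lam > 0, MeasureTheory.IntegrableOn
      (fun t => (t / (2 * (1 + t ^ 2)) - 1 / (2 * Real.sqrt t * (lam + Real.sqrt t))) * η t)
      (Set.Ioi 0))
    (hφ : ∀ lam > 0, Real.log (φ lam)
      = γ + ∫ t in Set.Ioi (0:ℝ), (t / (1 + t ^ 2) - 1 / (lam + t)) * η t)
    (hχ : ∀ lam > 0, Real.log (χ lam)
      = γ / 2 + ∫ t in Set.Ioi (0:ℝ),
          (t / (2 * (1 + t ^ 2)) - 1 / (2 * Real.sqrt t * (lam + Real.sqrt t))) * η t) :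
    ∀ lam > 0,
      |Real.log (χ lam) - (1 / 2) * Real.log (φ (lam ^ 2))| ≤ Real.pi / 2 ∧
      Real.exp (-Real.pi / 2) * Real.sqrt (φ (lam ^ 2)) ≤ χ lam ∧
      χ lam ≤ Real.exp (Real.pi / 2) * Real.sqrt (φ (lam ^ 2)) := by
  intro lam hlam
  have hlam2 : (0:ℝ) < lam ^ 2 := by positivity
  have hfint := hχint lam hlam
  have hgint := hφint (lam ^ 2) hlam2
  have hgint' := hgint.const_mul (1/2 : ℝ)
  set f : ℝ → ℝ := fun t =>
    (t / (2 * (1 + t ^ 2)) - 1 / (2 * Real.sqrt t * (lam + Real.sqrt t))) * η t with hfdef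
  set g : ℝ → ℝ := fun t => (t / (1 + t ^ 2) - 1 / (lam ^ 2 + t)) * η t with hgdef
  set h : ℝ → ℝ := fun t => f t - (1/2) * g t with hhdef
  have hhint : IntegrableOn h (Ioi 0) := hfint.sub hgint'
  have hdiff : Real.log (χ lam) - (1 / 2) * Real.log (φ (lam ^ 2)) = ∫ t in Ioi (0:ℝ), h t := by
    have := integral_sub hfint hgint'
    rw [hχ lam hlam, hφ (lam ^ 2) hlam2, hhdef]
    rw [this, integral_const_mul]
    ring
  obtain ⟨hbint, hbval⟩ := stmt5_aux_integral lam hlam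
  have hbint' := hbint.const_mul (1/2 : ℝ)
  have hbound : |∫ t in Ioi (0:ℝ), h t| ≤ π / 2 := by
    have h1 : |∫ t in Ioi (0:ℝ), h t| ≤ ∫ t in Ioi (0:ℝ), |h t| := by
      simpa using norm_integral_le_integral_norm (μ := volume.restrict (Ioi 0)) h
    have h2 : ∫ t in Ioi (0:ℝ), |h t|
        ≤ ∫ t in Ioi (0:ℝ), (1/2) * (lam / (Real.sqrt t * (lam^2 + t))) := by
      refine setIntegral_mono_on hhint.abs hbint' measurableSet_Ioi ?_
      intro t ht
      have ht0 : (0:ℝ) < t := ht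
      have heq : h t = (1/2) * ((1/(lam^2+t) - 1/(Real.sqrt t * (lam + Real.sqrt t))) * η t) := by
        simp only [hhdef, hfdef, hgdef]
        have h1 : (1:ℝ) + t^2 ≠ 0 := by positivity
        have h2 : Real.sqrt t ≠ 0 := (Real.sqrt_pos.2 ht0).ne'
        have h3 : lam + Real.sqrt t ≠ 0 := by positivity
        have h4 : lam^2 + t ≠ 0 := by positivity
        field_simp
        ring
      rw [heq, abs_mul, abs_mul]
      have hη1 : |η t| ≤ 1 := by
        obtain ⟨h0, h1'⟩ := hη t ht0
        rw [abs_of_nonneg h0]; exact h1'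
      have := stmt5_aux_ptwise lam t hlam ht0
      have hb0 : 0 ≤ lam / (Real.sqrt t * (lam^2 + t)) := by positivity
      calc |(1:ℝ)/2| * (|1/(lam^2+t) - 1/(Real.sqrt t * (lam + Real.sqrt t))| * |η t|)
          ≤ |(1:ℝ)/2| * ((lam / (Real.sqrt t * (lam^2 + t))) * 1) := by
            apply mul_le_mul_of_nonneg_left _ (abs_nonneg _)
            exact mul_le_mul this hη1 (abs_nonneg _) hb0
        _ = (1/2) * (lam / (Real.sqrt t * (lam^2 + t))) := by
            rw [abs_of_nonneg (by norm_num : (0:ℝ) ≤ 1/2)]; ring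
    have h3 : ∫ t in Ioi (0:ℝ), (1/2) * (lam / (Real.sqrt t * (lam^2 + t))) = π / 2 := by
      rw [integral_const_mul, hbval]; ring
    linarith
  rw [hdiff]
  refine ⟨hbound, ?_, ?_⟩ <;>
  · have habs := abs_le.1 hbound
    have hχe : χ lam = Real.exp (Real.log (χ lam)) := (Real.exp_log (hχpos lam hlam)).symm
    have hsq : Real.sqrt (φ (lam ^ 2)) = Real.exp ((1/2) * Real.log (φ (lam ^ 2))) := by
      rw [Real.sqrt_eq_rpow, Real.rpow_def_of_pos (hφpos _ hlam2), mul_comm]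
    rw [hχe, hsq, ← Real.exp_add, Real.exp_le_exp]
    rw [← hdiff] at habs
    linarith [habs.1, habs.2]
end
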